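/- Let α ≥ 2, m ≥ 1, N ≥ αm, μ > 0, and let r be an integer with (m/(αm-α+1))^{1/(α-1)} (N - α + 1) + α - 1 < r ≤ N. Then μ_s(α) = (μα/C(N,r)) ∑_{φ=α}^{min(r,αm)} (1/(H_φ - H_{φ-α})) C(αm, φ) C(N-αm, r-φ) > μ_s(1) = μ m C(N-1, r-1)/C(N,r). -/

import Mathlib

/-- The ℓ-th harmonic number H_ℓ = ∑_{i=1}^ℓ 1/i. -/
noncomputable def H (n : ℕ) : ℝ := ∑ i ∈ Finset.range n, 1 / (i + 1 : ℝ)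

lemma pow_aux (α m : ℕ) (hm : 1 ≤ m) : α * m + 1 ≤ m ^ α + α := by
  induction α with
  | zero => simp
  | succ k ih =>
      have h1 : 1 ≤ m ^ k := Nat.one_le_pow _ _ hm
      have : m ^ (k+1) = m ^ k * m := pow_succ m k
      nlinarith

lemma vandermonde_sum (a b n : ℕ) :
    ∑ k ∈ Finset.range (n+1), a.choose k * b.choose (n-k) = (a+b).choose n := by
  rw [Nat.add_choose_eq, Finset.Nat.sum_antidiagonal_eq_sum_range_succ_mk]

lemma weighted_vandermonde_sum (a b n : ℕ) :
    ∑ k ∈ Finset.range (n+1+1), k * ((a+1).choose k * b.choose (n+1-k))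
      = (a+1) * (a+b).choose n := by
  rw [Finset.sum_range_succ']
  simp only [Nat.zero_mul, add_zero]
  have : ∀ j ∈ Finset.range (n+1),
      (j+1) * ((a+1).choose (j+1) * b.choose (n+1-(j+1)))
        = (a+1) * (a.choose j * b.choose (n-j)) := by
    intro j hj
    have h := Nat.add_one_mul_choose_eq a j
    have hs : n + 1 - (j+1) = n - j := by omega
    rw [hs]
    calc (j+1) * ((a+1).choose (j+1) * b.choose (n-j))
        = ((a+1).choose (j+1) * (j+1)) * b.choose (n-j) := by ring
      _ = (Nat.succ a * a.choose j) * b.choose (n-j) := by rw [← h]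
      _ = (a+1) * (a.choose j * b.choose (n-j)) := by simp [Nat.succ_eq_add_one]; ring
  rw [Finset.sum_congr rfl this, ← Finset.mul_sum, vandermonde_sum]

lemma H_diff_pos {α φ : ℕ} (hα : 1 ≤ α) (hαφ : α ≤ φ) : 0 < H φ - H (φ - α) := by
  have hsplit : H (φ - α) + ∑ i ∈ Finset.Ico (φ - α) φ, 1 / ((i : ℝ) + 1) = H φ := by
    rw [H, H, Finset.range_eq_Ico, Finset.range_eq_Ico]
    exact Finset.sum_Ico_consecutive (fun i : ℕ => 1 / ((i : ℝ) + 1)) (Nat.zero_le _) (Nat.sub_le φ α)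
  have hne : φ - α < φ := Nat.sub_lt (by omega) (by omega)
  have hpos : 0 < ∑ i ∈ Finset.Ico (φ - α) φ, 1 / ((i : ℝ) + 1) :=
    Finset.sum_pos (fun i _ => by positivity) (Finset.nonempty_Ico.mpr hne)
  linarith

lemma H_diff_le {α φ : ℕ} (hα : 1 ≤ α) (hαφ : α ≤ φ) :
    H φ - H (φ - α) ≤ (α : ℝ) * (1 / ((φ : ℝ) - α + 1)) := by
  have hsplit : H (φ - α) + ∑ i ∈ Finset.Ico (φ - α) φ, 1 / ((i : ℝ) + 1) = H φ := by
    rw [H, H, Finset.range_eq_Ico, Finset.range_eq_Ico]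
    exact Finset.sum_Ico_consecutive (fun i : ℕ => 1 / ((i : ℝ) + 1)) (Nat.zero_le _) (Nat.sub_le φ α)
  have hcast : ((φ - α : ℕ) : ℝ) = (φ : ℝ) - α := by
    push_cast [Nat.cast_sub hαφ]; ring
  have hb : ∀ i ∈ Finset.Ico (φ - α) φ, 1 / ((i : ℝ) + 1) ≤ 1 / ((φ : ℝ) - α + 1) := by
    intro i hi
    have h1 : φ - α ≤ i := (Finset.mem_Ico.mp hi).1
    have h2 : ((φ - α : ℕ) : ℝ) ≤ (i : ℝ) := Nat.cast_le.mpr h1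
    have hpos : (0 : ℝ) < (φ : ℝ) - α + 1 := by
      rw [← hcast]; positivity
    apply one_div_le_one_div_of_le hpos
    rw [← hcast]; linarith
  have hcard : (Finset.Ico (φ - α) φ).card = α := by
    rw [Nat.card_Ico]; omega
  have := Finset.sum_le_card_nsmul _ _ _ hb
  rw [hcard] at this
  simp only [nsmul_eq_mul] at this
  linarith

lemma sums_weighted (a b r : ℕ) (ha : 1 ≤ a) (hr : 1 ≤ r) :
    ∑ k ∈ Finset.range (r+1), k * (a.choose k * b.choose (r-k))
      = a * (a - 1 + b).choose (r-1) := by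
  obtain ⟨a', rfl⟩ : ∃ a', a = a' + 1 := ⟨a - 1, by omega⟩
  obtain ⟨r', rfl⟩ : ∃ r', r = r' + 1 := ⟨r - 1, by omega⟩
  simpa using weighted_vandermonde_sum a' b r'

lemma N_lt_mr (N r α m : ℕ) (hα : 2 ≤ α) (hm : 1 ≤ m) (hN : α * m ≤ N)
    (hr : ((m : ℝ) / ((α : ℝ) * m - α + 1)) ^ ((1 : ℝ) / ((α : ℝ) - 1)) *
        ((N : ℝ) - α + 1) + α - 1 < (r : ℝ)) : N < m * r := by
  have hm1 : (1:ℝ) ≤ m := by exact_mod_cast hm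
  have hα2 : (2:ℝ) ≤ α := by exact_mod_cast hα
  set c : ℝ := ((m : ℝ) / ((α : ℝ) * m - α + 1)) ^ ((1 : ℝ) / ((α : ℝ) - 1)) with hc
  have hden : (1:ℝ) ≤ (α:ℝ)*m - α + 1 := by nlinarith
  have hbpos : 0 < (m:ℝ)/((α:ℝ)*m - α + 1) := by positivity
  have hble : (m:ℝ)/((α:ℝ)*m - α + 1) ≤ 1 := by
    rw [div_le_one (by linarith)]; nlinarith
  have hexp : (0:ℝ) ≤ 1/((α:ℝ)-1) := div_nonneg zero_le_one (by linarith)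
  have hc1 : c ≤ 1 := Real.rpow_le_one hbpos.le hble hexp
  have hcm : 1 ≤ (m:ℝ) * c := by
    have hcastα : ((α - 1 : ℕ) : ℝ) = (α:ℝ) - 1 := by
      push_cast [Nat.cast_sub (by omega : 1 ≤ α)]; ring
    have hkey : (1/(m:ℝ)) ^ ((α:ℝ)-1) ≤ (m:ℝ)/((α:ℝ)*m - α + 1) := by
      rw [← hcastα, Real.rpow_natCast, one_div_pow]
      have hmp : (0:ℝ) < (m:ℝ)^(α-1) := by positivity
      rw [div_le_div_iff₀ hmp (by linarith)]
      have hpow : (m:ℝ)^(α-1) * (m:ℝ) = (m:ℝ)^α := by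
        rw [← pow_succ]; congr 1; omega
      have hnat : (α * m + 1 : ℝ) ≤ (m:ℝ)^α + α := by exact_mod_cast pow_aux α m hm
      nlinarith
    have h2 : ((1/(m:ℝ)) ^ ((α:ℝ)-1)) ^ ((1:ℝ)/((α:ℝ)-1)) ≤ c :=
      Real.rpow_le_rpow (by positivity) hkey hexp
    have h3 : ((1/(m:ℝ)) ^ ((α:ℝ)-1)) ^ ((1:ℝ)/((α:ℝ)-1)) = 1/(m:ℝ) := by
      rw [← Real.rpow_mul (by positivity), mul_one_div, div_self (by linarith : (α:ℝ)-1 ≠ 0),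
        Real.rpow_one]
    have hdiv : 1/(m:ℝ) ≤ c := h3 ▸ h2
    have hm0 : (0:ℝ) < m := by linarith
    rw [div_le_iff₀ hm0] at hdiv
    linarith [hdiv]
  have hmr : (N:ℝ) < m * r := by
    have hstep : (m:ℝ) * (c * ((N:ℝ) - α + 1) + α - 1) < m * r :=
      mul_lt_mul_of_pos_left hr (by linarith)
    nlinarith [mul_nonneg (Nat.cast_nonneg N : (0:ℝ) ≤ N) (by linarith : (0:ℝ) ≤ (m:ℝ)*c - 1),
      mul_nonneg (mul_nonneg (by linarith : (0:ℝ) ≤ (α:ℝ)-1) (by linarith : (0:ℝ) ≤ (m:ℝ)))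
        (by linarith : (0:ℝ) ≤ 1 - c)]
  exact_mod_cast hmr

theorem fixed_access_alpha_better_than_one (N r α m : ℕ) (μ : ℝ)
    (hα : 2 ≤ α) (hm : 1 ≤ m) (hN : α * m ≤ N) (hμ : 0 < μ)
    (hr : ((m : ℝ) / ((α : ℝ) * m - α + 1)) ^ ((1 : ℝ) / ((α : ℝ) - 1)) *
        ((N : ℝ) - α + 1) + α - 1 < (r : ℝ))
    (hrN : r ≤ N) :
    (μ * α / (N.choose r : ℝ)) *
        ∑ φ ∈ Finset.Icc α (min r (α * m)),
          (1 / (H φ - H (φ - α))) * ((α * m).choose φ : ℝ) * ((N - α * m).choose (r - φ) : ℝ) >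
      μ * m * ((N - 1).choose (r - 1) : ℝ) / (N.choose r : ℝ) := by
  have hm1 : (1:ℝ) ≤ m := by exact_mod_cast hm
  have hα2 : (2:ℝ) ≤ α := by exact_mod_cast hα
  have hNmr : N < m * r := N_lt_mr N r α m hα hm hN hr
  have ham : 2 ≤ α * m := le_trans hα (Nat.le_mul_of_pos_right α (by omega))
  have hN2 : 2 ≤ N := le_trans ham hN
  have hr1 : 1 ≤ r := by
    rcases Nat.eq_zero_or_pos r with rfl | h
    · simp at hNmr
    · exact h
  set X : ℝ := ((N-1).choose (r-1) : ℝ) with hX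
  set Y : ℝ := (N.choose r : ℝ) with hY
  have hYpos : 0 < Y := by rw [hY]; exact_mod_cast Nat.choose_pos hrN
  have hXid : (N:ℝ) * X = r * Y := by
    have h := Nat.add_one_mul_choose_eq (N-1) (r-1)
    have h1 : N - 1 + 1 = N := by omega
    have h2 : r - 1 + 1 = r := by omega
    rw [h1, h2] at h
    rw [hX, hY]
    exact_mod_cast h.trans (Nat.mul_comm _ _)
  have hYltmX : Y < m * X := by
    have hlt : (N:ℝ) < m * r := by exact_mod_cast hNmr
    have hNpos : (0:ℝ) < N := by positivity
    nlinarith [mul_pos (sub_pos.mpr hlt) hYpos]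
  -- nat sums
  set a := α * m with ha
  have hvdm : ∑ k ∈ Finset.range (r+1), a.choose k * (N-a).choose (r-k) = N.choose r := by
    rw [vandermonde_sum, Nat.add_sub_cancel' hN]
  have hwt : ∑ k ∈ Finset.range (r+1), k * (a.choose k * (N-a).choose (r-k))
      = a * (N-1).choose (r-1) := by
    rw [sums_weighted a (N-a) r (by omega) hr1]
    congr 2
    omega
  have hv' : ∑ φ ∈ Finset.range (r+1), (a.choose φ : ℝ) * ((N-a).choose (r-φ) : ℝ) = Y := by
    rw [hY]; exact_mod_cast hvdm
  have hw' : ∑ φ ∈ Finset.range (r+1), (φ:ℝ) * ((a.choose φ : ℝ) * ((N-a).choose (r-φ) : ℝ))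
      = (a:ℝ) * X := by
    rw [hX]; exact_mod_cast hwt
  -- sums of g
  set g : ℕ → ℝ := fun φ => ((φ:ℝ) - α + 1) * ((a.choose φ : ℝ) * ((N-a).choose (r-φ) : ℝ))
    with hg
  have hsumg : ∑ φ ∈ Finset.range (r+1), g φ = (a:ℝ) * X - ((α:ℝ) - 1) * Y := by
    have : ∀ φ ∈ Finset.range (r+1), g φ
        = (φ:ℝ) * ((a.choose φ : ℝ) * ((N-a).choose (r-φ) : ℝ))
          - ((α:ℝ) - 1) * ((a.choose φ : ℝ) * ((N-a).choose (r-φ) : ℝ)) := by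
      intro φ _; rw [hg]; ring
    rw [Finset.sum_congr rfl this, Finset.sum_sub_distrib, ← Finset.mul_sum, hv', hw']
  have hsubset : Finset.Icc α (min r a) ⊆ Finset.range (r+1) := by
    intro x hx
    simp only [Finset.mem_Icc, Finset.mem_range] at *
    omega
  have hstepB : ∑ φ ∈ Finset.range (r+1), g φ ≤ ∑ φ ∈ Finset.Icc α (min r a), g φ := by
    rw [← Finset.sum_sdiff hsubset]
    have hnp : ∑ φ ∈ Finset.range (r+1) \ Finset.Icc α (min r a), g φ ≤ 0 := by
      apply Finset.sum_nonpos
      intro φ hφ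
      rw [Finset.mem_sdiff, Finset.mem_range, Finset.mem_Icc] at hφ
      obtain ⟨hφr, hφn⟩ := hφ
      by_cases hcase : φ < α
      · have h1 : (φ:ℝ) - α + 1 ≤ 0 := by
          have : (φ:ℝ) + 1 ≤ (α:ℝ) := by exact_mod_cast hcase
          linarith
        rw [hg]
        exact mul_nonpos_of_nonpos_of_nonneg h1 (by positivity)
      · have hlt : a < φ := by omega
        rw [hg]
        simp [Nat.choose_eq_zero_of_lt hlt]
    linarith
  have hstepA : ∑ φ ∈ Finset.Icc α (min r a), g φ
      ≤ (α:ℝ) * ∑ φ ∈ Finset.Icc α (min r a),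
          (1 / (H φ - H (φ - α))) * (a.choose φ : ℝ) * ((N-a).choose (r-φ) : ℝ) := by
    rw [Finset.mul_sum]
    apply Finset.sum_le_sum
    intro φ hφ
    rw [Finset.mem_Icc] at hφ
    have hαφ : α ≤ φ := hφ.1
    have hd : 0 < H φ - H (φ - α) := H_diff_pos (by omega) hαφ
    have hu : H φ - H (φ - α) ≤ (α:ℝ) * (1 / ((φ:ℝ) - α + 1)) := H_diff_le (by omega) hαφ
    have hq : (0:ℝ) < (φ:ℝ) - α + 1 := by
      have : (α:ℝ) ≤ (φ:ℝ) := by exact_mod_cast hαφ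
      linarith
    have hqd : ((φ:ℝ) - α + 1) * (H φ - H (φ - α)) ≤ α := by
      rw [mul_one_div] at hu
      calc ((φ:ℝ) - α + 1) * (H φ - H (φ - α)) ≤ ((φ:ℝ) - α + 1) * ((α:ℝ)/((φ:ℝ) - α + 1)) :=
            mul_le_mul_of_nonneg_left hu hq.le
        _ = α := by field_simp
    have hqα : (φ:ℝ) - α + 1 ≤ (α:ℝ) * (1 / (H φ - H (φ - α))) := by
      rw [mul_one_div, le_div_iff₀ hd]
      linarith
    have hcc : (0:ℝ) ≤ (a.choose φ : ℝ) * ((N-a).choose (r-φ) : ℝ) := by positivity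
    calc g φ ≤ ((α:ℝ) * (1 / (H φ - H (φ - α)))) * ((a.choose φ : ℝ) * ((N-a).choose (r-φ) : ℝ)) := by
          rw [hg]; exact mul_le_mul_of_nonneg_right hqα hcc
      _ = (α:ℝ) * ((1 / (H φ - H (φ - α))) * (a.choose φ : ℝ) * ((N-a).choose (r-φ) : ℝ)) := by
          ring
  set S : ℝ := ∑ φ ∈ Finset.Icc α (min r a),
      (1 / (H φ - H (φ - α))) * (a.choose φ : ℝ) * ((N-a).choose (r-φ) : ℝ) with hS
  have key : (m:ℝ) * X < (α:ℝ) * S := by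
    have haX : (a:ℝ) * X = (α:ℝ) * ((m:ℝ) * X) := by
      rw [ha]; push_cast; ring
    nlinarith [mul_lt_mul_of_pos_left hYltmX (show (0:ℝ) < (α:ℝ) - 1 by linarith)]
  have hfin : μ * (m * X) / Y < μ * ((α:ℝ) * S) / Y := by
    exact div_lt_div_of_pos_right (mul_lt_mul_of_pos_left key hμ) hYpos
  calc μ * m * X / Y = μ * (m * X) / Y := by ring
    _ < μ * ((α:ℝ) * S) / Y := hfin
    _ = (μ * α / Y) * S := by ring
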